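/- Let w ∈ W̃_{D_m} and 0 ≤ k ≤ m, and suppose μ_k^w satisfies (SP1). Then c_k^w = #{j : ν_k^w(j) = 2} + #{j : ν_k^w(j) ∉ ℤ}/4 = #{j : ν_k^w(j) = 0} + #{j : ν_k^w(j) ∉ ℤ}/4. -/

import Mathlib

open Finset

namespace TypeD

abbrev VecZ (m : ℕ) := Fin (2 * m) → ℤ
abbrev VecR (m : ℕ) := Fin (2 * m) → ℝ

/-- `σ ∈ S_{2m}^∘`: even, and commuting with `j ↦ j*`. -/
def InSO (m : ℕ) (σ : Equiv.Perm (Fin (2 * m))) : Prop :=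
  Equiv.Perm.sign σ = 1 ∧ ∀ j, σ j.rev = (σ j).rev

/-- `t ∈ X_{*D_m}`. -/
def InXD (m : ℕ) (t : VecZ m) : Prop :=
  ∀ j j' : Fin (2 * m), t j + t j.rev = t j' + t j'.rev

/-- `ω_i ∈ ℤ^{2m}`: writing `i = 2m·b + c` with `0 ≤ c < 2m`, the first `c` entries
are `-b-1` and the rest are `-b`. -/
def omegaD (m : ℕ) (i : ℤ) (j : Fin (2 * m)) : ℤ :=
  if ((j : ℕ) : ℤ) < i % (2 * (m : ℤ)) then -(i / (2 * (m : ℤ))) - 1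
  else -(i / (2 * (m : ℤ)))

/-- `μ_k^w = w·ω_k − ω_k` for `w = t_t σ`. -/
def muD (m : ℕ) (t : VecZ m) (σ : Equiv.Perm (Fin (2 * m))) (k : ℤ) (j : Fin (2 * m)) : ℤ :=
  t j + omegaD m k (σ⁻¹ j) - omegaD m k j

/-- `ν_k^w = (μ_k^w + μ_{−k}^w)/2`, real-valued. -/
noncomputable def nuD (m : ℕ) (t : VecZ m) (σ : Equiv.Perm (Fin (2 * m))) (k : ℤ) (j : Fin (2 * m)) : ℝ :=
  ((muD m t σ k j + muD m t σ (-k) j : ℤ) : ℝ) / 2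

/-- `c_k^w = #{j : μ_k^w(j) = 2}`. -/
noncomputable def cD (m : ℕ) (t : VecZ m) (σ : Equiv.Perm (Fin (2 * m))) (k : ℤ) : ℕ :=
  Set.ncard {j : Fin (2 * m) | muD m t σ k j = 2}

/-- the cocharacter `μ = (2^{(q)}, 1^{(2m−2q)}, 0^{(q)})`. -/
def muQ (m q : ℕ) (j : Fin (2 * m)) : ℤ :=
  if (j : ℕ) < q then 2 else if (j : ℕ) < 2 * m - q then 1 else 0

/-- the coroot lattice `Q∨_{D_m}`. -/
def QveeD (m : ℕ) : Set (VecZ m) :=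
  {x | (∀ j, x j + x j.rev = 0) ∧
    Even (∑ j ∈ Finset.univ.filter (fun j : Fin (2 * m) => (j : ℕ) < m), x j)}

/-- `j ∈ A_a` (1-indexed `{1,…,a} ∪ {2m+1−a,…,2m}`). -/
def memA (m a : ℕ) (j : Fin (2 * m)) : Prop := (j : ℕ) < a ∨ 2 * m - a ≤ (j : ℕ)

/-- `j ∈ B_a` (1-indexed `{a+1,…,2m−a}`). -/
def memB (m a : ℕ) (j : Fin (2 * m)) : Prop := a ≤ (j : ℕ) ∧ (j : ℕ) < 2 * m - a

def IsIntVal (x : ℝ) : Prop := ∃ z : ℤ, x = (z : ℝ)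

/-- a half-integer: an element of `(1/2)ℤ ∖ ℤ`. -/
def IsHalfInt (x : ℝ) : Prop := (∃ z : ℤ, x = (z : ℝ) / 2) ∧ ¬ IsIntVal x

/-- `μ_k^w` is self-dual, i.e. `μ_k^w = μ_{−k}^w`. -/
def SelfDual (m : ℕ) (t : VecZ m) (σ : Equiv.Perm (Fin (2 * m))) (k : ℤ) : Prop :=
  ∀ j, muD m t σ k j = muD m t σ (-k) j

/-- (SP1) at `k`. -/
def SP1 (m : ℕ) (t : VecZ m) (σ : Equiv.Perm (Fin (2 * m))) (k : ℤ) : Prop :=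
  (∀ j, muD m t σ k j + muD m t σ (-k) j.rev = 2) ∧
  (∀ j, 0 ≤ muD m t σ k j ∧ muD m t σ k j ≤ 2)

/-- (SP2) at `k`. -/
def SP2 (m q : ℕ) (t : VecZ m) (σ : Equiv.Perm (Fin (2 * m))) (k : ℤ) : Prop :=
  cD m t σ k ≤ q

/-- (SP3) at `k`. -/
def SP3 (m q : ℕ) (t : VecZ m) (σ : Equiv.Perm (Fin (2 * m))) (k : ℕ) : Prop :=
  (SelfDual m t σ (k : ℤ) ∧ (fun j => muD m t σ (k : ℤ) j - muQ m q j) ∉ QveeD m) →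
    ∃ j₁ j₂ : Fin (2 * m), memA m k j₁ ∧ memB m k j₂ ∧
      muD m t σ (k : ℤ) j₁ = 1 ∧ muD m t σ (k : ℤ) j₂ = 1

/-- (SP1') at `k`. -/
def SP1' (m : ℕ) (t : VecZ m) (σ : Equiv.Perm (Fin (2 * m))) (k : ℤ) : Prop :=
  (∀ j, nuD m t σ k j + nuD m t σ k j.rev = 2) ∧
  (∀ j, 0 ≤ nuD m t σ k j ∧ nuD m t σ k j ≤ 2)

/-- (SP2') at `k`. -/
def SP2' (m q : ℕ) (t : VecZ m) (σ : Equiv.Perm (Fin (2 * m))) (k : ℤ) : Prop :=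
  (Set.ncard {j : Fin (2 * m) | nuD m t σ k j = 2} : ℝ) +
    (Set.ncard {j : Fin (2 * m) | ¬ IsIntVal (nuD m t σ k j)} : ℝ) / 4 ≤ (q : ℝ)

/-- `ν_k^w − μ ∈ Q∨_{D_m}`. -/
def NuCongQvee (m q : ℕ) (t : VecZ m) (σ : Equiv.Perm (Fin (2 * m))) (k : ℤ) : Prop :=
  ∃ y ∈ QveeD m, ∀ j, nuD m t σ k j = ((muQ m q j + y j : ℤ) : ℝ)

/-- (SP3') at `k`. -/
def SP3' (m q : ℕ) (t : VecZ m) (σ : Equiv.Perm (Fin (2 * m))) (k : ℕ) : Prop :=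
  ((∀ j, IsIntVal (nuD m t σ (k : ℤ) j)) ∧ ¬ NuCongQvee m q t σ (k : ℤ)) →
    ∃ j₁ j₂ : Fin (2 * m), memA m k j₁ ∧ memB m k j₂ ∧
      nuD m t σ (k : ℤ) j₁ = 1 ∧ nuD m t σ (k : ℤ) j₂ = 1

/-- the orbit `S_{2m}^∘ · μ` inside `ℝ^{2m}`. -/
def OrbitMu (m q : ℕ) : Set (VecR m) :=
  {x | ∃ σ : Equiv.Perm (Fin (2 * m)), InSO m σ ∧ ∀ j, x j = ((muQ m q (σ⁻¹ j) : ℤ) : ℝ)}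

/-- `Conv(S_{2m}^∘ · μ)`. -/
def ConvMu (m q : ℕ) : Set (VecR m) := convexHull ℝ (OrbitMu m q)

/-- the affine action of `w = t_t σ` on `ℝ^{2m}`. -/
noncomputable def actR (m : ℕ) (t : VecZ m) (σ : Equiv.Perm (Fin (2 * m))) (x : VecR m) (j : Fin (2 * m)) : ℝ :=
  (t j : ℝ) + x (σ⁻¹ j)

/-- the point `a_k = ((−1/2)^{(k)}, 0^{(2m−2k)}, (1/2)^{(k)})`. -/
noncomputable def aD (m k : ℕ) (j : Fin (2 * m)) : ℝ :=
  if (j : ℕ) < k then -(1 / 2) else if (j : ℕ) < 2 * m - k then 0 else 1 / 2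

/-- the point `a_{0'} = (−1, 0^{(2m−2)}, 1)`. -/
noncomputable def a0' (m : ℕ) (j : Fin (2 * m)) : ℝ :=
  if (j : ℕ) = 0 then -1 else if (j : ℕ) = 2 * m - 1 then 1 else 0

/-- the point `a_{m'} = ((−1/2)^{(m−1)}, 1/2, −1/2, (1/2)^{(m−1)})`. -/
noncomputable def am' (m : ℕ) (j : Fin (2 * m)) : ℝ :=
  if (j : ℕ) < m - 1 then -(1 / 2)
  else if (j : ℕ) = m - 1 then 1 / 2
  else if (j : ℕ) = m then -(1 / 2)
  else 1 / 2

/-- `ν_{0'}^w = w·a_{0'} − a_{0'}`. -/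
noncomputable def nu0' (m : ℕ) (t : VecZ m) (σ : Equiv.Perm (Fin (2 * m))) (j : Fin (2 * m)) : ℝ :=
  actR m t σ (a0' m) j - a0' m j

/-- `ν_{m'}^w = w·a_{m'} − a_{m'}`. -/
noncomputable def num' (m : ℕ) (t : VecZ m) (σ : Equiv.Perm (Fin (2 * m))) (j : Fin (2 * m)) : ℝ :=
  actR m t σ (am' m) j - am' m j

/-- membership in the real apartment `{x : x(1)+x(2m) = ⋯ = x(m)+x(m+1)}`. -/
def InApartR (m : ℕ) (x : VecR m) : Prop :=
  ∀ j j' : Fin (2 * m), x j + x j.rev = x j' + x j'.rev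

/-- membership in the base alcove `A_{D_m}`. -/
def InAlcove (m : ℕ) (x : VecR m) : Prop :=
  InApartR m x ∧
  (∀ j0 jt : Fin (2 * m), (j0 : ℕ) = 0 → 1 ≤ (jt : ℕ) → (jt : ℕ) ≤ m →
    x j0 < x jt ∧ x j0.rev - 1 < x jt) ∧
  (∀ j j' : Fin (2 * m), 1 ≤ (j : ℕ) → (j : ℕ) ≤ m - 2 → (j : ℕ) < (j' : ℕ) →
    (j' : ℕ) ≤ m → x j < x j')

/-- `w = t_t σ` is μ-permissible: `w ≡ t_μ mod W_{aff}` (equivalently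
`ν_0^w − μ ∈ Q∨_{D_m}`) and `w·x − x ∈ Conv(S_{2m}^∘ μ)` for all `x` in the base alcove. -/
def MuPermissible (m q : ℕ) (t : VecZ m) (σ : Equiv.Perm (Fin (2 * m))) : Prop :=
  NuCongQvee m q t σ 0 ∧
  ∀ x : VecR m, InAlcove m x → (fun j => actR m t σ x j - x j) ∈ ConvMu m q

/-- the coroot `α∨_{i,j} = e_i − e_j + e_{j*} − e_{i*}`. -/
def corootD (m : ℕ) (i j l : Fin (2 * m)) : ℤ :=
  (if l = i then 1 else 0) - (if l = j then 1 else 0) +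
    (if l = j.rev then 1 else 0) - (if l = i.rev then 1 else 0)

/-- `(t', σ')` represents `s_{α̃_{i,j;d}} · w` for `w = t_t σ`: on the apartment it
acts by `x ↦ w·x − ⟨α̃_{i,j;d}, w·x⟩ α∨_{i,j}`. -/
def IsReflOf (m : ℕ) (i j : Fin (2 * m)) (d : ℤ) (t : VecZ m) (σ : Equiv.Perm (Fin (2 * m)))
    (t' : VecZ m) (σ' : Equiv.Perm (Fin (2 * m))) : Prop :=
  ∀ x : VecR m, InApartR m x → ∀ l,
    actR m t' σ' x l =
      actR m t σ x l - (actR m t σ x i - actR m t σ x j - (d : ℝ)) * (corootD m i j l : ℝ)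

/-- Membership of `i` in `2mℤ ± I`. -/
def FaceIdxD (m : ℕ) (I : Finset ℕ) (i : ℤ) : Prop :=
  ∃ a ∈ I, ∃ b : ℤ, i = 2 * (m : ℤ) * b + (a : ℤ) ∨ i = 2 * (m : ℤ) * b - (a : ℤ)

/-- `v` is a `d`-face of type `(2m, I)`. -/
structure IsFaceD (m : ℕ) (I : Finset ℕ) (d : ℤ) (v : ℤ → VecZ m) : Prop where
  per : ∀ i, FaceIdxD m I i → ∀ j, v (i + 2 * (m : ℤ)) j = v i j - 1
  mono : ∀ i i', FaceIdxD m I i → FaceIdxD m I i' → i ≤ i' → ∀ j, v i' j ≤ v i j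
  sumEq : ∀ i i', FaceIdxD m I i → FaceIdxD m I i' → (∑ j, v i j) - (∑ j, v i' j) = i' - i
  dual : ∀ i, FaceIdxD m I i → ∀ j, v i j + v (-i) j.rev = d

/-- `μ_i^v := v_i − ω_i` for a face `v`. -/
def muFaceD (m : ℕ) (v : ℤ → VecZ m) (i : ℤ) (j : Fin (2 * m)) : ℤ := v i j - omegaD m i j

/-- `ε` of a translation vector: the sum of the first `m` entries mod 2. -/
def epsVec (m : ℕ) (x : VecZ m) : ZMod 2 :=
  ((∑ j ∈ Finset.univ.filter (fun j : Fin (2 * m) => (j : ℕ) < m), x j : ℤ) : ZMod 2)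

/-- membership of `(v, γ)` in `F_{I,D_m}`. -/
def MemFD (m : ℕ) (I : Finset ℕ) (v : ℤ → VecZ m) (γ : ZMod 2) : Prop :=
  (∃ d, IsFaceD m I d v) ∧
  (if 0 ∈ I then
    if m ∈ I then
      (fun j => muFaceD m v 0 j - muFaceD m v (m : ℤ) j) ∈ QveeD m ∧
        γ = epsVec m (fun j => muFaceD m v 0 j)
    else γ = epsVec m (fun j => muFaceD m v 0 j)
  else if m ∈ I then γ = epsVec m (fun j => muFaceD m v (m : ℤ) j)
  else True)

/-- membership of `t_tx σx` in `W_{I,D_m}` (the group conditions on `(tx, σx)` being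
assumed separately): it lies in `W_{aff,D_m}` and fixes `a_k` for all `k ∈ I`. -/
def MemWI (m : ℕ) (I : Finset ℕ) (tx : VecZ m) (σx : Equiv.Perm (Fin (2 * m))) : Prop :=
  tx ∈ QveeD m ∧ ∀ k ∈ I, ∀ j, (tx j : ℝ) + aD m k (σx⁻¹ j) = aD m k j

/-- (SP1) at `k` for a face. -/
def SP1F (m : ℕ) (v : ℤ → VecZ m) (k : ℕ) : Prop :=
  (∀ j, muFaceD m v (k : ℤ) j + muFaceD m v (-(k : ℤ)) j.rev = 2) ∧
  (∀ j, 0 ≤ muFaceD m v (k : ℤ) j ∧ muFaceD m v (k : ℤ) j ≤ 2)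

/-- (SP2) at `k` for a face. -/
def SP2F (m q : ℕ) (v : ℤ → VecZ m) (k : ℕ) : Prop :=
  Set.ncard {j : Fin (2 * m) | muFaceD m v (k : ℤ) j = 2} ≤ q

/-- (SP3) at `k` for a face. -/
def SP3F (m q : ℕ) (v : ℤ → VecZ m) (k : ℕ) : Prop :=
  ((∀ j, muFaceD m v (k : ℤ) j = muFaceD m v (-(k : ℤ)) j) ∧
      (fun j => muFaceD m v (k : ℤ) j - muQ m q j) ∉ QveeD m) →
    ∃ j₁ j₂ : Fin (2 * m), memA m k j₁ ∧ memB m k j₂ ∧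
      muFaceD m v (k : ℤ) j₁ = 1 ∧ muFaceD m v (k : ℤ) j₂ = 1

/-- `(v, γ) ∈ F_{I,D_m}` is μ-spin-permissible. -/
def SpinPermF (m q : ℕ) (I : Finset ℕ) (v : ℤ → VecZ m) (γ : ZMod 2) : Prop :=
  γ = epsVec m (fun j => muQ m q j) ∧ ∀ k ∈ I, SP1F m v k ∧ SP2F m q v k ∧ SP3F m q v k

theorem statement8 (m : ℕ) (hm : 2 ≤ m)
    (t : VecZ m) (σ : Equiv.Perm (Fin (2 * m))) (ht : InXD m t) (hσ : InSO m σ)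
    (k : ℕ) (hk : k ≤ m) (h1 : SP1 m t σ (k : ℤ)) :
    (cD m t σ (k : ℤ) : ℝ) =
      (Set.ncard {j : Fin (2 * m) | nuD m t σ (k : ℤ) j = 2} : ℝ) +
        (Set.ncard {j : Fin (2 * m) | ¬ IsIntVal (nuD m t σ (k : ℤ) j)} : ℝ) / 4 ∧
    (cD m t σ (k : ℤ) : ℝ) =
      (Set.ncard {j : Fin (2 * m) | nuD m t σ (k : ℤ) j = 0} : ℝ) +
        (Set.ncard {j : Fin (2 * m) | ¬ IsIntVal (nuD m t σ (k : ℤ) j)} : ℝ) / 4 := by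
  classical
  -- dual relation from SP1
  have hdual : ∀ j : Fin (2 * m), muD m t σ (-(k : ℤ)) j = 2 - muD m t σ (k : ℤ) j.rev := by
    intro j
    have h := h1.1 j.rev
    rw [Fin.rev_rev] at h
    omega
  -- explicit values of omegaD
  have homega : ∀ l : Fin (2 * m), omegaD m (k : ℤ) l = if (l : ℕ) < k then -1 else 0 := by
    intro l
    have hmod : (k : ℤ) % (2 * (m : ℤ)) = k := Int.emod_eq_of_lt (by omega) (by omega)
    have hdiv : (k : ℤ) / (2 * (m : ℤ)) = 0 := Int.ediv_eq_zero_of_lt (by omega) (by omega)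
    unfold omegaD
    rw [hmod, hdiv]
    split_ifs <;> omega
  -- sums
  have hsum_mu_t : ∀ i : ℤ, ∑ j, muD m t σ i j = ∑ j, t j := by
    intro i
    unfold muD
    rw [Finset.sum_sub_distrib, Finset.sum_add_distrib]
    have : ∑ j : Fin (2 * m), omegaD m i (σ⁻¹ j) = ∑ j : Fin (2 * m), omegaD m i j :=
      Equiv.sum_comp σ⁻¹ (fun j => omegaD m i j)
    rw [this]
    ring
  have hrevsum : ∀ f : Fin (2 * m) → ℤ, (∑ j : Fin (2 * m), f j.rev) = ∑ j : Fin (2 * m), f j := by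
    intro f
    simpa using Equiv.sum_comp (Fin.revPerm (n := 2 * m)) f
  have hsum : ∑ j, muD m t σ (k : ℤ) j = 2 * (m : ℤ) := by
    have h1' : ∑ j, muD m t σ (-(k : ℤ)) j = ∑ j : Fin (2 * m), (2 - muD m t σ (k : ℤ) j.rev) :=
      Finset.sum_congr rfl (fun j _ => hdual j)
    have h2' : ∑ j : Fin (2 * m), (2 - muD m t σ (k : ℤ) j.rev)
        = 2 * (2 * (m : ℤ)) - ∑ j, muD m t σ (k : ℤ) j := by
      rw [Finset.sum_sub_distrib, hrevsum (muD m t σ (k : ℤ))]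
      simp [Finset.card_univ, mul_comm]
    have e1 := hsum_mu_t (k : ℤ)
    have e2 := hsum_mu_t (-(k : ℤ))
    omega
  -- pair sums of t are 2
  have hT : ∀ j : Fin (2 * m), t j + t j.rev = 2 := by
    have hst : ∑ j, t j = 2 * (m : ℤ) := by rw [← hsum_mu_t (k : ℤ)]; exact hsum
    have j0 : Fin (2 * m) := ⟨0, by omega⟩
    have hpair : ∑ j : Fin (2 * m), (t j + t j.rev) = (2 * m : ℕ) * (t j0 + t j0.rev) := by
      rw [Finset.sum_congr rfl (fun j _ => ht j j0)]
      simp only [Finset.sum_const, Finset.card_univ, Fintype.card_fin, nsmul_eq_mul]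
      try push_cast
      try ring
    have h2' : ∑ j : Fin (2 * m), (t j + t j.rev) = 2 * (2 * (m : ℤ)) := by
      rw [Finset.sum_add_distrib, hrevsum t, hst]; ring
    have hj0 : t j0 + t j0.rev = 2 := by
      have hne : ((2 * m : ℕ) : ℤ) ≠ 0 := by omega
      have : ((2 * m : ℕ) : ℤ) * (t j0 + t j0.rev) = ((2 * m : ℕ) : ℤ) * 2 := by
        rw [← hpair]; push_cast at h2' ⊢; omega
      exact mul_left_cancel₀ hne this
    intro j
    have := ht j j0
    omega
  -- j and j.rev cannot both be < k
  have hrevk : ∀ j : Fin (2 * m), ¬((j : ℕ) < k ∧ (j.rev : ℕ) < k) := by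
    rintro j ⟨ha, hb⟩
    have h1' := Fin.val_rev j
    have h2' := j.isLt
    omega
  -- never (2,2)
  have hD : ∀ j : Fin (2 * m),
      ¬(muD m t σ (k : ℤ) j = 2 ∧ muD m t σ (k : ℤ) j.rev = 2) := by
    rintro j ⟨ha, hb⟩
    have e := hT j
    have hc := hrevk j
    unfold muD at ha hb
    rw [homega (σ⁻¹ j), homega j] at ha
    rw [homega (σ⁻¹ j.rev), homega j.rev] at hb
    split_ifs at ha hb <;> omega
  -- σ⁻¹ commutes with rev
  have hcomm : ∀ j : Fin (2 * m), σ⁻¹ j.rev = (σ⁻¹ j).rev := by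
    intro j
    have h := hσ.2 (σ⁻¹ j)
    rw [(by simp : σ (σ⁻¹ j) = j)] at h
    rw [← h]; simp
  -- never (0,0)
  have hG : ∀ j : Fin (2 * m),
      ¬(muD m t σ (k : ℤ) j = 0 ∧ muD m t σ (k : ℤ) j.rev = 0) := by
    rintro j ⟨ha, hb⟩
    have e := hT j
    have hc := hrevk (σ⁻¹ j)
    unfold muD at ha hb
    rw [hcomm j] at hb
    rw [homega (σ⁻¹ j), homega j] at ha
    rw [homega ((σ⁻¹ j).rev), homega j.rev] at hb
    split_ifs at ha hb <;> omega
  -- nu characterizations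
  have hnu : ∀ j, nuD m t σ (k : ℤ) j
      = (((muD m t σ (k : ℤ) j + (2 - muD m t σ (k : ℤ) j.rev)) : ℤ) : ℝ) / 2 := by
    intro j; unfold nuD; rw [hdual j]
  have hnu2 : ∀ j, nuD m t σ (k : ℤ) j = 2
      ↔ (muD m t σ (k : ℤ) j = 2 ∧ muD m t σ (k : ℤ) j.rev = 0) := by
    intro j
    rw [hnu j]
    constructor
    · intro h
      have hb1 := h1.2 j
      have hb2 := h1.2 j.rev
      have h4 : ((muD m t σ (k : ℤ) j + (2 - muD m t σ (k : ℤ) j.rev) : ℤ) : ℝ)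
          = ((4 : ℤ) : ℝ) := by push_cast at h ⊢; linarith
      have h4' := Int.cast_injective (α := ℝ) h4
      omega
    · rintro ⟨ha, hb⟩
      rw [ha, hb]
      norm_num
  have hnu0 : ∀ j, nuD m t σ (k : ℤ) j = 0
      ↔ (muD m t σ (k : ℤ) j = 0 ∧ muD m t σ (k : ℤ) j.rev = 2) := by
    intro j
    rw [hnu j]
    constructor
    · intro h
      have hb1 := h1.2 j
      have hb2 := h1.2 j.rev
      have h4 : ((muD m t σ (k : ℤ) j + (2 - muD m t σ (k : ℤ) j.rev) : ℤ) : ℝ)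
          = ((0 : ℤ) : ℝ) := by push_cast at h ⊢; linarith
      have h4' := Int.cast_injective (α := ℝ) h4
      omega
    · rintro ⟨ha, hb⟩
      rw [ha, hb]
      norm_num
  have hint : ∀ j, IsIntVal (nuD m t σ (k : ℤ) j)
      ↔ (2 ∣ (muD m t σ (k : ℤ) j + (2 - muD m t σ (k : ℤ) j.rev))) := by
    intro j
    rw [hnu j]
    constructor
    · rintro ⟨z, hz⟩
      refine ⟨z, ?_⟩
      have h4 : ((muD m t σ (k : ℤ) j + (2 - muD m t σ (k : ℤ) j.rev) : ℤ) : ℝ)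
          = ((2 * z : ℤ) : ℝ) := by push_cast at hz ⊢; linarith
      exact Int.cast_injective (α := ℝ) h4
    · rintro ⟨z, hz⟩
      exact ⟨z, by rw [hz]; push_cast; ring⟩
  -- ncard to filter card
  have hset : ∀ (p : Fin (2 * m) → Prop) (_ : DecidablePred p),
      {j | p j}.ncard = (univ.filter p).card := by
    intro p _
    rw [← Set.ncard_coe_finset]
    congr 1
    ext j; simp
  -- symmetry of paired counts
  have hsym : ∀ a b : ℤ,
      (univ.filter (fun j : Fin (2 * m) =>
        muD m t σ (k : ℤ) j = a ∧ muD m t σ (k : ℤ) j.rev = b)).card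
      = (univ.filter (fun j : Fin (2 * m) =>
        muD m t σ (k : ℤ) j = b ∧ muD m t σ (k : ℤ) j.rev = a)).card := by
    intro a b
    have himg : (univ.filter (fun j : Fin (2 * m) =>
          muD m t σ (k : ℤ) j = b ∧ muD m t σ (k : ℤ) j.rev = a))
        = (univ.filter (fun j : Fin (2 * m) =>
          muD m t σ (k : ℤ) j = a ∧ muD m t σ (k : ℤ) j.rev = b)).image Fin.rev := by
      ext j
      simp only [Finset.mem_image, Finset.mem_filter, Finset.mem_univ, true_and]
      constructor
      · rintro ⟨hb, ha⟩
        exact ⟨j.rev, ⟨ha, by rwa [Fin.rev_rev]⟩, Fin.rev_rev j⟩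
      · rintro ⟨x, ⟨hxa, hxb⟩, rfl⟩
        rw [Fin.rev_rev]
        exact ⟨hxb, hxa⟩
    rw [himg, Finset.card_image_of_injective _ Fin.rev_injective]
  -- splitting lemmas
  have hsplit2 : (univ.filter (fun j : Fin (2 * m) => muD m t σ (k : ℤ) j = 2)).card
      = (univ.filter (fun j : Fin (2 * m) =>
          muD m t σ (k : ℤ) j = 2 ∧ muD m t σ (k : ℤ) j.rev = 0)).card
      + (univ.filter (fun j : Fin (2 * m) =>
          muD m t σ (k : ℤ) j = 2 ∧ muD m t σ (k : ℤ) j.rev = 1)).card := by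
    rw [Finset.card_filter, Finset.card_filter, Finset.card_filter, ← Finset.sum_add_distrib]
    refine Finset.sum_congr rfl fun j _ => ?_
    have hb1 := h1.2 j
    have hb2 := h1.2 j.rev
    have h3 := hD j
    split_ifs <;> omega
  have hsplit0 : (univ.filter (fun j : Fin (2 * m) => muD m t σ (k : ℤ) j = 0)).card
      = (univ.filter (fun j : Fin (2 * m) =>
          muD m t σ (k : ℤ) j = 0 ∧ muD m t σ (k : ℤ) j.rev = 2)).card
      + (univ.filter (fun j : Fin (2 * m) =>
          muD m t σ (k : ℤ) j = 0 ∧ muD m t σ (k : ℤ) j.rev = 1)).card := by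
    rw [Finset.card_filter, Finset.card_filter, Finset.card_filter, ← Finset.sum_add_distrib]
    refine Finset.sum_congr rfl fun j _ => ?_
    have hb1 := h1.2 j
    have hb2 := h1.2 j.rev
    have h3 := hG j
    split_ifs <;> omega
  have hsplitOdd : (univ.filter (fun j : Fin (2 * m) =>
        ¬ (2 ∣ (muD m t σ (k : ℤ) j + (2 - muD m t σ (k : ℤ) j.rev))))).card
      = (univ.filter (fun j : Fin (2 * m) =>
          muD m t σ (k : ℤ) j = 2 ∧ muD m t σ (k : ℤ) j.rev = 1)).card
      + (univ.filter (fun j : Fin (2 * m) =>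
          muD m t σ (k : ℤ) j = 1 ∧ muD m t σ (k : ℤ) j.rev = 2)).card
      + (univ.filter (fun j : Fin (2 * m) =>
          muD m t σ (k : ℤ) j = 1 ∧ muD m t σ (k : ℤ) j.rev = 0)).card
      + (univ.filter (fun j : Fin (2 * m) =>
          muD m t σ (k : ℤ) j = 0 ∧ muD m t σ (k : ℤ) j.rev = 1)).card := by
    rw [Finset.card_filter, Finset.card_filter, Finset.card_filter, Finset.card_filter,
      Finset.card_filter, ← Finset.sum_add_distrib, ← Finset.sum_add_distrib,
      ← Finset.sum_add_distrib]
    refine Finset.sum_congr rfl fun j _ => ?_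
    have hb1 := h1.2 j
    have hb2 := h1.2 j.rev
    split_ifs <;> omega
  -- n2 = n0
  have hn20 : (univ.filter (fun j : Fin (2 * m) => muD m t σ (k : ℤ) j = 2)).card
      = (univ.filter (fun j : Fin (2 * m) => muD m t σ (k : ℤ) j = 0)).card := by
    have key : ∑ j : Fin (2 * m),
        ((if muD m t σ (k : ℤ) j = 2 then (1 : ℤ) else 0)
          - (if muD m t σ (k : ℤ) j = 0 then (1 : ℤ) else 0))
        = ∑ j, (muD m t σ (k : ℤ) j - 1) := by
      refine Finset.sum_congr rfl fun j _ => ?_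
      have hb1 := h1.2 j
      split_ifs <;> omega
    rw [Finset.sum_sub_distrib, Finset.sum_sub_distrib] at key
    have hone : ∑ _j : Fin (2 * m), (1 : ℤ) = 2 * (m : ℤ) := by
      simp [Finset.card_univ]
    rw [hsum, hone] at key
    have c2 : ((univ.filter (fun j : Fin (2 * m) => muD m t σ (k : ℤ) j = 2)).card : ℤ)
        = ∑ j, (if muD m t σ (k : ℤ) j = 2 then (1 : ℤ) else 0) := by
      rw [Finset.card_filter]
      push_cast
      rfl
    have c0 : ((univ.filter (fun j : Fin (2 * m) => muD m t σ (k : ℤ) j = 0)).card : ℤ)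
        = ∑ j, (if muD m t σ (k : ℤ) j = 0 then (1 : ℤ) else 0) := by
      rw [Finset.card_filter]
      push_cast
      rfl
    omega
  -- convert goal ncards to filter cards
  have gc : cD m t σ (k : ℤ)
      = (univ.filter (fun j : Fin (2 * m) => muD m t σ (k : ℤ) j = 2)).card := by
    unfold cD
    exact hset _ _
  have g2 : {j : Fin (2 * m) | nuD m t σ (k : ℤ) j = 2}.ncard
      = (univ.filter (fun j : Fin (2 * m) =>
          muD m t σ (k : ℤ) j = 2 ∧ muD m t σ (k : ℤ) j.rev = 0)).card := by
    rw [show {j : Fin (2 * m) | nuD m t σ (k : ℤ) j = 2}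
        = {j : Fin (2 * m) | muD m t σ (k : ℤ) j = 2 ∧ muD m t σ (k : ℤ) j.rev = 0}
      from Set.ext fun j => hnu2 j]
    exact hset _ _
  have g0 : {j : Fin (2 * m) | nuD m t σ (k : ℤ) j = 0}.ncard
      = (univ.filter (fun j : Fin (2 * m) =>
          muD m t σ (k : ℤ) j = 0 ∧ muD m t σ (k : ℤ) j.rev = 2)).card := by
    rw [show {j : Fin (2 * m) | nuD m t σ (k : ℤ) j = 0}
        = {j : Fin (2 * m) | muD m t σ (k : ℤ) j = 0 ∧ muD m t σ (k : ℤ) j.rev = 2}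
      from Set.ext fun j => hnu0 j]
    exact hset _ _
  have gOdd : {j : Fin (2 * m) | ¬ IsIntVal (nuD m t σ (k : ℤ) j)}.ncard
      = (univ.filter (fun j : Fin (2 * m) =>
          ¬ (2 ∣ (muD m t σ (k : ℤ) j + (2 - muD m t σ (k : ℤ) j.rev))))).card := by
    rw [show {j : Fin (2 * m) | ¬ IsIntVal (nuD m t σ (k : ℤ) j)}
        = {j : Fin (2 * m) |
            ¬ (2 ∣ (muD m t σ (k : ℤ) j + (2 - muD m t σ (k : ℤ) j.rev)))}
      from Set.ext fun j => not_congr (hint j)]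
    exact hset _ _
  -- final arithmetic
  have hs20 := hsym 2 0
  have hs21 := hsym 2 1
  have hs10 := hsym 1 0
  have hOdd4 : (univ.filter (fun j : Fin (2 * m) =>
        ¬ (2 ∣ (muD m t σ (k : ℤ) j + (2 - muD m t σ (k : ℤ) j.rev))))).card
      = 4 * (univ.filter (fun j : Fin (2 * m) =>
          muD m t σ (k : ℤ) j = 2 ∧ muD m t σ (k : ℤ) j.rev = 1)).card := by
    omega
  have hA : (univ.filter (fun j : Fin (2 * m) =>
        muD m t σ (k : ℤ) j = 0 ∧ muD m t σ (k : ℤ) j.rev = 2)).card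
      = (univ.filter (fun j : Fin (2 * m) =>
        muD m t σ (k : ℤ) j = 2 ∧ muD m t σ (k : ℤ) j.rev = 0)).card := hs20.symm
  constructor
  · rw [gc, g2, gOdd, hsplit2, hOdd4]
    push_cast
    ring
  · rw [gc, g0, gOdd, hsplit2, hOdd4, hA]
    push_cast
    ring

end TypeD
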